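/- For all real numbers a, b > 0 and θ with 0 < θ ≤ 1, one has θ·|a−b|·(2/(a+b))^{1−θ} ≤ |a^θ − b^θ| ≤ θ·|a−b|·(a^{θ−1} + b^{θ−1})/2. -/

import Mathlib

open Real Set

private lemma mid_ineq (x y q : ℝ) (hx : 0 < x) (hy : 0 < y) (hq : q ≤ 0) :
    2 * ((x + y) / 2) ^ q ≤ x ^ q + y ^ q := by
  have hs : Real.sqrt (x * y) ≤ (x + y) / 2 := by
    rw [show (x + y) / 2 = Real.sqrt (((x + y) / 2) ^ 2) from (Real.sqrt_sq (by positivity)).symm]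
    exact Real.sqrt_le_sqrt (by nlinarith [sq_nonneg (x - y)])
  have hsp : 0 < Real.sqrt (x * y) := Real.sqrt_pos.2 (by positivity)
  have h1 : ((x + y) / 2) ^ q ≤ Real.sqrt (x * y) ^ q :=
    Real.rpow_le_rpow_of_nonpos hsp hs hq
  have h2 : Real.sqrt (x * y) ^ q = x ^ (q / 2) * y ^ (q / 2) := by
    rw [Real.sqrt_eq_rpow, ← Real.rpow_mul (by positivity)]
    rw [show 1 / 2 * q = q / 2 by ring, Real.mul_rpow hx.le hy.le]
  have h3 : x ^ (q / 2) * x ^ (q / 2) = x ^ q := by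
    rw [← Real.rpow_add hx]; ring_nf
  have h4 : y ^ (q / 2) * y ^ (q / 2) = y ^ q := by
    rw [← Real.rpow_add hy]; ring_nf
  nlinarith [sq_nonneg (x ^ (q / 2) - y ^ (q / 2)), h1, h2, h3, h4]

private lemma aux_key (a b θ : ℝ) (ha : 0 < a) (hb : 0 < b) (hθ0 : 0 < θ) (hθ1 : θ ≤ 1)
    (hba : b ≤ a) :
    θ * (a - b) * ((a + b) / 2) ^ (θ - 1) ≤ a ^ θ - b ^ θ ∧
      a ^ θ - b ^ θ ≤ θ * (a - b) * ((a ^ (θ - 1) + b ^ (θ - 1)) / 2) := by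
  set m : ℝ := (a + b) / 2 with hm_def
  set h : ℝ := (a - b) / 2 with hh_def
  have hm : 0 < m := by positivity
  have hh0 : 0 ≤ h := by simp only [hh_def]; linarith
  have hhm : h < m := by simp only [hm_def, hh_def]; linarith
  have hma : m + h = a := by simp only [hm_def, hh_def]; ring
  have hmb : m - h = b := by simp only [hm_def, hh_def]; ring
  have hpos1 : ∀ t ∈ Icc (0:ℝ) h, 0 < m + t := fun t ht => by
    have := ht.1; linarith
  have hpos2 : ∀ t ∈ Icc (0:ℝ) h, 0 < m - t := fun t ht => by
    have := ht.2; linarith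
  -- derivative helper
  have HD : ∀ (p t : ℝ), 0 < m + t → 0 < m - t →
      HasDerivAt (fun s => (m + s) ^ p) (p * (m + t) ^ (p - 1)) t ∧
        HasDerivAt (fun s => (m - s) ^ p) (-(p * (m - t) ^ (p - 1))) t := by
    intro p t h1 h2
    constructor
    · have := (Real.hasDerivAt_rpow_const (x := m + t) (p := p) (Or.inl h1.ne')).comp t
        ((hasDerivAt_id t).const_add m)
      simpa [Function.comp_def] using this
    · have := (Real.hasDerivAt_rpow_const (x := m - t) (p := p) (Or.inl h2.ne')).comp t
        ((hasDerivAt_id t).const_sub m)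
      simpa [Function.comp_def] using this
  -- lower bound function
  have hg1 : ∀ t ∈ Icc (0:ℝ) h,
      HasDerivAt (fun s => (m + s) ^ θ - (m - s) ^ θ - 2 * θ * m ^ (θ - 1) * s)
        (θ * ((m + t) ^ (θ - 1) + (m - t) ^ (θ - 1) - 2 * m ^ (θ - 1))) t := by
    intro t ht
    obtain ⟨d1, d2⟩ := HD θ t (hpos1 t ht) (hpos2 t ht)
    have d3 : HasDerivAt (fun s : ℝ => 2 * θ * m ^ (θ - 1) * s)
        (2 * θ * m ^ (θ - 1)) t := by
      simpa using (hasDerivAt_id t).const_mul (2 * θ * m ^ (θ - 1))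
    have := (d1.sub d2).sub d3
    exact this.congr_deriv (by ring)
  have mono1 : MonotoneOn (fun s => (m + s) ^ θ - (m - s) ^ θ - 2 * θ * m ^ (θ - 1) * s)
      (Icc (0:ℝ) h) := by
    apply monotoneOn_of_deriv_nonneg (convex_Icc 0 h)
    · exact fun t ht => (hg1 t ht).differentiableAt.continuousAt.continuousWithinAt
    · intro t ht
      rw [interior_Icc] at ht
      exact (hg1 t (Ioo_subset_Icc_self ht)).differentiableAt.differentiableWithinAt
    · intro t ht
      rw [interior_Icc] at ht
      have ht' := Ioo_subset_Icc_self ht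
      rw [(hg1 t ht').deriv]
      have hmid := mid_ineq (m + t) (m - t) (θ - 1) (hpos1 t ht') (hpos2 t ht') (by linarith)
      have : (m + t + (m - t)) / 2 = m := by ring
      rw [this] at hmid
      have : 0 ≤ (m + t) ^ (θ - 1) + (m - t) ^ (θ - 1) - 2 * m ^ (θ - 1) := by linarith
      exact mul_nonneg hθ0.le this
  have key1 : 2 * θ * m ^ (θ - 1) * h ≤ (m + h) ^ θ - (m - h) ^ θ := by
    have h0mem : (0:ℝ) ∈ Icc (0:ℝ) h := ⟨le_refl 0, hh0⟩
    have hmem : h ∈ Icc (0:ℝ) h := ⟨hh0, le_refl h⟩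
    have := mono1 h0mem hmem hh0
    simp only [add_zero, sub_zero, mul_zero] at this
    linarith
  -- upper bound function
  have hg2 : ∀ t ∈ Icc (0:ℝ) h,
      HasDerivAt (fun s => θ * s * ((m + s) ^ (θ - 1) + (m - s) ^ (θ - 1)) -
          ((m + s) ^ θ - (m - s) ^ θ))
        ((θ * t) * ((θ - 1) * ((m + t) ^ (θ - 2) - (m - t) ^ (θ - 2)))) t := by
    intro t ht
    obtain ⟨d1, d2⟩ := HD θ t (hpos1 t ht) (hpos2 t ht)
    obtain ⟨e1, e2⟩ := HD (θ - 1) t (hpos1 t ht) (hpos2 t ht)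
    rw [show θ - 1 - 1 = θ - 2 by ring] at e1 e2
    have dc : HasDerivAt (fun s : ℝ => θ * s) θ t := by
      simpa using (hasDerivAt_id t).const_mul θ
    have := (dc.mul (e1.add e2)).sub (d1.sub d2)
    exact this.congr_deriv (by simp only [Pi.add_apply]; ring)
  have mono2 : MonotoneOn (fun s => θ * s * ((m + s) ^ (θ - 1) + (m - s) ^ (θ - 1)) -
      ((m + s) ^ θ - (m - s) ^ θ)) (Icc (0:ℝ) h) := by
    apply monotoneOn_of_deriv_nonneg (convex_Icc 0 h)
    · exact fun t ht => (hg2 t ht).differentiableAt.continuousAt.continuousWithinAt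
    · intro t ht
      rw [interior_Icc] at ht
      exact (hg2 t (Ioo_subset_Icc_self ht)).differentiableAt.differentiableWithinAt
    · intro t ht
      rw [interior_Icc] at ht
      have ht' := Ioo_subset_Icc_self ht
      rw [(hg2 t ht').deriv]
      have hle : (m + t) ^ (θ - 2) ≤ (m - t) ^ (θ - 2) :=
        Real.rpow_le_rpow_of_nonpos (hpos2 t ht') (by linarith [ht.1]) (by linarith)
      have h2 : 0 ≤ (θ - 1) * ((m + t) ^ (θ - 2) - (m - t) ^ (θ - 2)) :=
        mul_nonneg_of_nonpos_of_nonpos (by linarith) (by linarith)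
      exact mul_nonneg (mul_nonneg hθ0.le ht.1.le) h2
  have key2 : (m + h) ^ θ - (m - h) ^ θ ≤ θ * h * ((m + h) ^ (θ - 1) + (m - h) ^ (θ - 1)) := by
    have h0mem : (0:ℝ) ∈ Icc (0:ℝ) h := ⟨le_refl 0, hh0⟩
    have hmem : h ∈ Icc (0:ℝ) h := ⟨hh0, le_refl h⟩
    have := mono2 h0mem hmem hh0
    simp only [add_zero, sub_zero, mul_zero, zero_mul] at this
    linarith
  rw [hma, hmb] at key1 key2
  have hab2 : a - b = 2 * h := by simp only [hh_def]; ring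
  constructor
  · calc θ * (a - b) * m ^ (θ - 1) = 2 * θ * m ^ (θ - 1) * h := by rw [hab2]; ring
    _ ≤ a ^ θ - b ^ θ := key1
  · calc a ^ θ - b ^ θ ≤ θ * h * (a ^ (θ - 1) + b ^ (θ - 1)) := key2
    _ = θ * (a - b) * ((a ^ (θ - 1) + b ^ (θ - 1)) / 2) := by rw [hab2]; ring

private lemma aux_main (a b θ : ℝ) (ha : 0 < a) (hb : 0 < b) (hθ0 : 0 < θ) (hθ1 : θ ≤ 1)
    (hba : b ≤ a) :
    θ * |a - b| * (2 / (a + b)) ^ (1 - θ) ≤ |a ^ θ - b ^ θ| ∧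
      |a ^ θ - b ^ θ| ≤ θ * |a - b| * ((a ^ (θ - 1) + b ^ (θ - 1)) / 2) := by
  obtain ⟨k1, k2⟩ := aux_key a b θ ha hb hθ0 hθ1 hba
  have habs1 : |a - b| = a - b := abs_of_nonneg (by linarith)
  have habs2 : |a ^ θ - b ^ θ| = a ^ θ - b ^ θ :=
    abs_of_nonneg (sub_nonneg.2 (Real.rpow_le_rpow hb.le hba hθ0.le))
  have hpow : (2 / (a + b)) ^ (1 - θ) = ((a + b) / 2) ^ (θ - 1) := by
    rw [show (2:ℝ) / (a + b) = ((a + b) / 2)⁻¹ by field_simp,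
      Real.inv_rpow (by positivity), ← Real.rpow_neg (by positivity),
      show -(1 - θ) = θ - 1 by ring]
  rw [habs1, habs2, hpow]
  exact ⟨k1, k2⟩

theorem stmt0 (a b θ : ℝ) (ha : 0 < a) (hb : 0 < b) (hθ0 : 0 < θ) (hθ1 : θ ≤ 1) :
    θ * |a - b| * (2 / (a + b)) ^ (1 - θ) ≤ |a ^ θ - b ^ θ| ∧
      |a ^ θ - b ^ θ| ≤ θ * |a - b| * ((a ^ (θ - 1) + b ^ (θ - 1)) / 2) := by
  rcases le_total b a with hba | hab
  · exact aux_main a b θ ha hb hθ0 hθ1 hba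
  · have := aux_main b a θ hb ha hθ0 hθ1 hab
    simpa [abs_sub_comm b a, abs_sub_comm (b ^ θ), add_comm b a, add_comm (b ^ (θ - 1))]
      using this
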